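/- The number of labeled DAGs on n nodes satisfies the recursion |G_n| = ∑_{i=1}^n (-1)^{i+1} C(n,i) 2^{i(n-i)} |G_{n-i}| with |G_0| = |G_1| = 1. -/

import Mathlib

open Real Filter Finset MeasureTheory Topology

/-- The number of directed acyclic graphs on `n` labeled vertices. -/
noncomputable def numDAGs (n : ℕ) : ℕ :=
  Nat.card {r : Fin n → Fin n → Prop // ∀ i, ¬ Relation.TransGen r i i}

section Aux

variable {V W : Type*}

/-- Relabelling vertices gives an equivalence of DAG types. -/
def dagEquiv (e : V ≃ W) :
    {r : V → V → Prop // ∀ i, ¬ Relation.TransGen r i i} ≃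
    {r : W → W → Prop // ∀ i, ¬ Relation.TransGen r i i} where
  toFun := fun ⟨r, hr⟩ => ⟨fun a b => r (e.symm a) (e.symm b), by
    intro j hj
    exact hr (e.symm j) (Relation.TransGen.lift e.symm (fun a b h => h) _ _ hj)⟩
  invFun := fun ⟨r, hr⟩ => ⟨fun a b => r (e a) (e b), by
    intro j hj
    exact hr (e j) (Relation.TransGen.lift e (fun a b h => h) _ _ hj)⟩
  left_inv := fun ⟨r, hr⟩ => by simp
  right_inv := fun ⟨r, hr⟩ => by simp

lemma step_aux {S : Finset V} (f : {v // v ∈ S} → {v // v ∉ S} → Prop)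
    (d : {v // v ∉ S} → {v // v ∉ S} → Prop) :
    ∀ u v, Relation.TransGen (fun u v => ∃ (hv : v ∉ S),
        (∃ (hu : u ∈ S), f ⟨u, hu⟩ ⟨v, hv⟩) ∨ (∃ (hu : u ∉ S), d ⟨u, hu⟩ ⟨v, hv⟩)) u v →
      ∀ (hu : u ∉ S), ∃ (hv : v ∉ S), Relation.TransGen d ⟨u, hu⟩ ⟨v, hv⟩ := by
  intro u v h
  induction h with
  | single h =>
    intro hu
    obtain ⟨hv, h⟩ := h
    rcases h with ⟨hu', _⟩ | ⟨hu', hd⟩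
    · exact absurd hu' hu
    · exact ⟨hv, Relation.TransGen.single hd⟩
  | tail hab hbc ih =>
    intro hu
    obtain ⟨hb, htg⟩ := ih hu
    obtain ⟨hc, h⟩ := hbc
    rcases h with ⟨hb', _⟩ | ⟨hb', hd⟩
    · exact absurd hb' hb
    · exact ⟨hc, htg.tail hd⟩

/-- A DAG in which every vertex of `S` is a source decomposes as a choice of edges
from `S` to its complement together with a DAG on the complement. -/
def decompEquiv (S : Finset V) :
    {r : V → V → Prop // (∀ i, ¬ Relation.TransGen r i i) ∧ ∀ v ∈ S, ∀ u, ¬ r u v} ≃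
    ({v // v ∈ S} → {v // v ∉ S} → Prop) ×
      {r : {v // v ∉ S} → {v // v ∉ S} → Prop // ∀ i, ¬ Relation.TransGen r i i} where
  toFun := fun ⟨r, hr⟩ =>
    ⟨fun a b => r a b, ⟨fun a b => r a b, by
      intro i hi
      exact hr.1 i.1 (Relation.TransGen.lift Subtype.val (fun a b h => h) _ _ hi)⟩⟩
  invFun := fun ⟨f, d, hd⟩ =>
    ⟨fun u v => ∃ (hv : v ∉ S),
        (∃ (hu : u ∈ S), f ⟨u, hu⟩ ⟨v, hv⟩) ∨ (∃ (hu : u ∉ S), d ⟨u, hu⟩ ⟨v, hv⟩), by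
      refine ⟨?_, ?_⟩
      · intro i hi
        have hiS : i ∉ S := by
          obtain ⟨c, -, hci⟩ := (Relation.TransGen.tail'_iff).mp hi
          exact hci.1
        obtain ⟨hv, htg⟩ := step_aux f d i i hi hiS
        exact hd ⟨i, hv⟩ htg
      · intro v hv u ⟨hv', _⟩
        exact hv' hv⟩
  left_inv := fun ⟨r, hr⟩ => by
    apply Subtype.ext
    funext u v
    apply propext
    constructor
    · rintro ⟨hv, ⟨hu, h⟩ | ⟨hu, h⟩⟩ <;> exact h
    · intro h
      have hv : v ∉ S := fun hv => hr.2 v hv u h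
      by_cases hu : u ∈ S
      · exact ⟨hv, Or.inl ⟨hu, h⟩⟩
      · exact ⟨hv, Or.inr ⟨hu, h⟩⟩
  right_inv := fun ⟨f, d, hd⟩ => by
    refine Prod.ext ?_ ?_
    · funext a b
      apply propext
      constructor
      · rintro ⟨hv, ⟨hu, h⟩ | ⟨hu, h⟩⟩
        · exact h
        · exact absurd a.2 hu
      · intro h
        exact ⟨b.2, Or.inl ⟨a.2, h⟩⟩
    · apply Subtype.ext
      funext a b
      apply propext
      constructor
      · rintro ⟨hv, ⟨hu, h⟩ | ⟨hu, h⟩⟩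
        · exact absurd hu a.2
        · exact h
      · intro h
        exact ⟨b.2, Or.inr ⟨a.2, h⟩⟩

/-- Every DAG on a finite nonempty vertex set has a source. -/
lemma exists_source [Finite V] [Nonempty V] (r : V → V → Prop)
    (hr : ∀ i, ¬ Relation.TransGen r i i) : ∃ v, ∀ u, ¬ r u v := by
  have : IsIrrefl V (Relation.TransGen r) := ⟨hr⟩
  have hwf := Finite.wellFounded_of_trans_of_irrefl (Relation.TransGen r)
  obtain ⟨v, -, hv⟩ := hwf.has_min Set.univ ⟨Classical.arbitrary V, trivial⟩
  exact ⟨v, fun u hu => hv u trivial (Relation.TransGen.single hu)⟩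

end Aux

lemma numDAGs_zero : numDAGs 0 = 1 := by
  rw [numDAGs, Nat.card_eq_one_iff_unique]
  constructor
  · constructor
    rintro ⟨r, _⟩ ⟨r', _⟩
    apply Subtype.ext
    funext i
    exact absurd i.2 (by simp)
  · exact ⟨⟨fun _ _ => False, fun i h => by cases h <;> assumption⟩⟩

lemma numDAGs_one : numDAGs 1 = 1 := by
  rw [numDAGs, Nat.card_eq_one_iff_unique]
  constructor
  · constructor
    rintro ⟨r, hr⟩ ⟨r', hr'⟩
    apply Subtype.ext
    funext i j
    apply propext
    have h1 : ¬ r i j := by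
      have := hr i
      rw [Subsingleton.elim j i] at *
      exact fun h => this (Relation.TransGen.single h)
    have h2 : ¬ r' i j := by
      have := hr' i
      rw [Subsingleton.elim j i] at *
      exact fun h => this (Relation.TransGen.single h)
    tauto
  · exact ⟨⟨fun _ _ => False, fun i h => by cases h <;> assumption⟩⟩

lemma NS_card (n : ℕ) (S : Finset (Fin n)) :
    Nat.card {r : Fin n → Fin n → Prop //
        (∀ i, ¬ Relation.TransGen r i i) ∧ ∀ v ∈ S, ∀ u, ¬ r u v} =
      2 ^ (S.card * (n - S.card)) * numDAGs (n - S.card) := by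
  have hcompl : Fintype.card {v : Fin n // v ∉ S} = n - S.card := by
    have := Fintype.card_subtype_compl (fun v : Fin n => v ∈ S)
    simpa using this
  have e2 := dagEquiv (Fintype.equivFinOfCardEq hcompl)
  rw [Nat.card_congr (decompEquiv S), Nat.card_prod, Nat.card_congr e2]
  rw [numDAGs]
  congr 1
  rw [Nat.card_fun, Nat.card_fun]
  have h1 : Nat.card {v : Fin n // v ∈ S} = S.card := by
    simp [Nat.card_eq_fintype_card]
  have h2 : Nat.card {v : Fin n // v ∉ S} = n - S.card := by
    rw [Nat.card_eq_fintype_card]; exact hcompl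
  have h3 : Nat.card Prop = 2 := by simp [Nat.card_eq_fintype_card]
  rw [h1, h2, h3, ← pow_mul, Nat.mul_comm]

lemma main_count (n : ℕ) (hn : 0 < n) :
    (numDAGs n : ℤ) =
      ∑ S ∈ ((Finset.univ : Finset (Fin n)).powerset.erase ∅),
        (-1 : ℤ) ^ (S.card + 1) *
          (Nat.card {r : Fin n → Fin n → Prop //
            (∀ i, ¬ Relation.TransGen r i i) ∧ ∀ v ∈ S, ∀ u, ¬ r u v} : ℤ) := by
  classical
  have : NeZero n := ⟨hn.ne'⟩
  set P : (Fin n → Fin n → Prop) → Prop := fun r => ∀ i, ¬ Relation.TransGen r i i with hP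
  set A : Finset (Fin n → Fin n → Prop) := Finset.univ.filter P with hA
  have hcard : ∀ S : Finset (Fin n),
      (Nat.card {r : Fin n → Fin n → Prop // P r ∧ ∀ v ∈ S, ∀ u, ¬ r u v} : ℤ) =
        ∑ r ∈ A, (if ∀ v ∈ S, ∀ u, ¬ r u v then (1 : ℤ) else 0) := by
    intro S
    rw [Nat.card_eq_fintype_card, Fintype.card_subtype]
    rw [Finset.sum_boole, hA, Finset.filter_filter]
  calc (numDAGs n : ℤ)
      = ∑ r ∈ A, (1 : ℤ) := by
        rw [Finset.sum_const, numDAGs, Nat.card_eq_fintype_card, Fintype.card_subtype]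
        simp [hA, hP]
    _ = ∑ r ∈ A, ∑ S ∈ ((Finset.univ : Finset (Fin n)).powerset.erase ∅),
          (-1 : ℤ) ^ (S.card + 1) * (if ∀ v ∈ S, ∀ u, ¬ r u v then (1 : ℤ) else 0) := by
        apply Finset.sum_congr rfl
        intro r hr
        have hPr : P r := (Finset.mem_filter.mp hr).2
        set src : Finset (Fin n) := Finset.univ.filter (fun v => ∀ u, ¬ r u v) with hsrc
        have hsub : ∀ S : Finset (Fin n), (∀ v ∈ S, ∀ u, ¬ r u v) ↔ S ⊆ src := by
          intro S
          simp only [hsrc, Finset.subset_iff, Finset.mem_filter, Finset.mem_univ, true_and]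
        have hne : src.Nonempty := by
          obtain ⟨v, hv⟩ := exists_source r hPr
          exact ⟨v, by simp [hsrc, hv]⟩
        have hstep : (∑ S ∈ ((Finset.univ : Finset (Fin n)).powerset.erase ∅),
            (-1 : ℤ) ^ (S.card + 1) * (if ∀ v ∈ S, ∀ u, ¬ r u v then (1 : ℤ) else 0)) =
            ∑ S ∈ src.powerset.erase ∅, (-1 : ℤ) ^ (S.card + 1) := by
          simp only [mul_ite, mul_one, mul_zero]
          rw [← Finset.sum_filter]
          congr 1
          ext T
          simp only [Finset.mem_filter, Finset.mem_erase, Finset.mem_powerset,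
            Finset.subset_univ, and_true, hsub]
        rw [hstep]
        have h0 : ∑ T ∈ src.powerset, (-1 : ℤ) ^ T.card = 0 :=
          Finset.sum_powerset_neg_one_pow_card_of_nonempty hne
        have hins : src.powerset = insert ∅ (src.powerset.erase ∅) :=
          (Finset.insert_erase (by simp)).symm
        rw [hins, Finset.sum_insert (Finset.notMem_erase _ _)] at h0
        simp only [Finset.card_empty, pow_zero] at h0
        have h1 : ∑ T ∈ src.powerset.erase ∅, (-1 : ℤ) ^ (T.card + 1) =
            - ∑ T ∈ src.powerset.erase ∅, (-1 : ℤ) ^ T.card := by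
          rw [← Finset.sum_neg_distrib]
          exact Finset.sum_congr rfl fun T _ => by ring
        rw [h1]
        linarith
    _ = _ := by
        rw [Finset.sum_comm]
        apply Finset.sum_congr rfl
        intro S _
        rw [hcard S, Finset.mul_sum]

/-- Robinson's recursion
`|G_n| = ∑_{i=1}^n (-1)^{i+1} C(n,i) 2^{i(n-i)} |G_{n-i}|` with `|G_0| = |G_1| = 1`. -/
theorem numDAGs_recursion :
    numDAGs 0 = 1 ∧ numDAGs 1 = 1 ∧
      ∀ n : ℕ, 2 < n →
        (numDAGs n : ℤ) =
          ∑ i ∈ Finset.Icc 1 n,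
            (-1 : ℤ) ^ (i + 1) * (n.choose i : ℤ) * 2 ^ (i * (n - i)) *
              (numDAGs (n - i) : ℤ) := by
  refine ⟨numDAGs_zero, numDAGs_one, ?_⟩
  intro n hn
  classical
  set g : ℕ → ℤ := fun i => (-1 : ℤ) ^ (i + 1) * 2 ^ (i * (n - i)) * (numDAGs (n - i) : ℤ)
    with hg
  have h1 : (numDAGs n : ℤ) =
      ∑ S ∈ ((Finset.univ : Finset (Fin n)).powerset.erase ∅), g S.card := by
    rw [main_count n (by omega)]
    apply Finset.sum_congr rfl
    intro S _
    rw [NS_card, hg]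
    push_cast
    ring
  have hps : ∑ S ∈ (Finset.univ : Finset (Fin n)).powerset, g S.card =
      ∑ m ∈ Finset.range (n + 1), (n.choose m) • g m := by
    have := Finset.sum_powerset_apply_card g (x := (Finset.univ : Finset (Fin n)))
    simpa using this
  have hins : (Finset.univ : Finset (Fin n)).powerset =
      insert ∅ (((Finset.univ : Finset (Fin n)).powerset).erase ∅) :=
    (Finset.insert_erase (by simp)).symm
  rw [hins, Finset.sum_insert (Finset.notMem_erase _ _), Finset.card_empty] at hps
  have hrange : Finset.range (n + 1) = insert 0 (Finset.Icc 1 n) := by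
    ext x
    simp only [Finset.mem_range, Finset.mem_insert, Finset.mem_Icc]
    omega
  rw [hrange, Finset.sum_insert (by simp), Nat.choose_zero_right, one_smul] at hps
  have h2 : ∑ S ∈ ((Finset.univ : Finset (Fin n)).powerset.erase ∅), g S.card =
      ∑ m ∈ Finset.Icc 1 n, (n.choose m) • g m := by linarith
  rw [h1, h2]
  apply Finset.sum_congr rfl
  intro m _
  rw [hg]
  simp only [nsmul_eq_mul]
  ring
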